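/- Let D = A ⋈ H be a double cross product of finite-dimensional Hopf algebras A and H. If D is semisimple, then both A and H are semisimple. -/

import Mathlib

open TensorProduct Coalgebra HopfAlgebra

section Part1
variable {D : Type*} [Ring D]

/-- In a semisimple ring, any two-sided ideal has a two-sided complement. -/
lemma two_sided_compl [IsSemisimpleRing D] (I : Ideal D) (hI : ∀ x ∈ I, ∀ d : D, x * d ∈ I) :
    ∃ J : Ideal D, (∀ x ∈ J, ∀ d : D, x * d ∈ J) ∧ IsCompl I J := by
  obtain ⟨J₀, hJ₀⟩ := ComplementedLattice.exists_isCompl I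
  have h1 : (1 : D) ∈ I ⊔ J₀ := by rw [hJ₀.sup_eq_top]; trivial
  obtain ⟨e, he, u, hu, heu⟩ := Submodule.mem_sup.mp h1
  have hru : ∀ a ∈ I, a * u = 0 := by
    intro a ha
    have h2 : a * e + a * u = a := by rw [← mul_add, heu, mul_one]
    have h3 : a - a * e = a * u := (eq_sub_of_add_eq' h2).symm
    have h5 : a * u ∈ I ⊓ J₀ :=
      ⟨h3 ▸ I.sub_mem ha (hI a ha e), J₀.smul_mem a hu⟩
    rw [hJ₀.inf_eq_bot] at h5
    exact h5
  set J : Ideal D :=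
    { carrier := {x | ∀ a ∈ I, a * x = 0}
      add_mem' := by intro x y hx hy a ha; show a * (x + y) = 0; rw [mul_add, hx a ha, hy a ha, add_zero]
      zero_mem' := by intro a _; simp
      smul_mem' := by
        intro d x hx a ha
        show a * (d * x) = 0
        rw [← mul_assoc]; exact hx _ (hI a ha d) } with hJdef
  have hmemJ : ∀ x : D, x ∈ J ↔ ∀ a ∈ I, a * x = 0 := fun x => Iff.rfl
  refine ⟨J, ?_, ?_, ?_⟩
  · intro x hx d
    rw [hmemJ] at hx ⊢
    intro a ha
    rw [← mul_assoc, hx a ha, zero_mul]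
  · -- disjoint
    rw [disjoint_iff, eq_bot_iff]
    obtain ⟨C, hC⟩ := ComplementedLattice.exists_isCompl (I ⊓ J)
    have h1' : (1 : D) ∈ (I ⊓ J) ⊔ C := by rw [hC.sup_eq_top]; trivial
    obtain ⟨c, hc, w, hw, hcw⟩ := Submodule.mem_sup.mp h1'
    intro x hx
    have hxc : x * c = 0 := hc.2 x hx.1
    have hxw : x = x * w := by
      have := congrArg (x * ·) hcw
      simpa [mul_add, hxc] using this.symm
    have hxC : x ∈ C := hxw ▸ C.smul_mem x hw
    have : x ∈ (I ⊓ J) ⊓ C := ⟨hx, hxC⟩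
    rwa [hC.inf_eq_bot] at this
  · -- codisjoint
    rw [codisjoint_iff, eq_top_iff]
    intro d _
    have hd : d = d * e + d * u := by rw [← mul_add, heu, mul_one]
    rw [hd]
    refine Submodule.add_mem _ (Submodule.mem_sup_left (I.smul_mem d he))
      (Submodule.mem_sup_right ?_)
    rw [hmemJ]
    intro a ha
    rw [← mul_assoc]; exact hru _ (hI a ha d)

end Part1

/-- A semisimple Hopf algebra has a normalized two-sided integral. -/
lemma exists_two_sided_integral (k D : Type*) [Field k] [Ring D] [HopfAlgebra k D]
    [IsSemisimpleRing D] :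
    ∃ Λ : D, Coalgebra.counit (R := k) Λ = 1 ∧
      (∀ d : D, d * Λ = Coalgebra.counit (R := k) d • Λ) ∧
      (∀ d : D, Λ * d = Coalgebra.counit (R := k) d • Λ) := by
  set ε := Bialgebra.counitAlgHom k D with hε
  set I : Ideal D := RingHom.ker ε.toRingHom with hIdef
  have hmemI : ∀ x : D, x ∈ I ↔ Coalgebra.counit (R := k) x = 0 := fun x => by rw [RingHom.mem_ker]; exact Iff.rfl
  have hI : ∀ x ∈ I, ∀ d : D, x * d ∈ I := by
    intro x hx d
    rw [hmemI] at hx ⊢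
    rw [Bialgebra.counit_mul, hx, zero_mul]
  obtain ⟨J, hJ, hcompl⟩ := two_sided_compl I hI
  -- find an element of J with nonzero counit
  have : ∃ x ∈ J, Coalgebra.counit (R := k) x ≠ 0 := by
    by_contra hcon
    push_neg at hcon
    have hJI : J ≤ I := fun x hx => (hmemI x).mpr (hcon x hx)
    have : I = ⊤ := by
      have := hcompl.sup_eq_top
      rwa [sup_eq_left.mpr hJI] at this
    have h1 : (1 : D) ∈ I := this ▸ trivial
    rw [hmemI, Bialgebra.counit_one] at h1
    exact one_ne_zero h1
  obtain ⟨x, hxJ, hxε⟩ := this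
  have hksmul : ∀ (S : Ideal D) (y : D), y ∈ S → ∀ c : k, c • y ∈ S := by
    intro S y hy c
    rw [Algebra.smul_def]
    exact S.smul_mem _ hy
  set Λ : D := (Coalgebra.counit (R := k) x)⁻¹ • x with hΛdef
  have hΛJ : Λ ∈ J := hksmul J x hxJ _
  have hΛε : Coalgebra.counit (R := k) Λ = 1 := by
    rw [hΛdef, map_smul, smul_eq_mul, inv_mul_cancel₀ hxε]
  have hbot : I ⊓ J = ⊥ := hcompl.inf_eq_bot
  have key : ∀ y : D, y ∈ J → Coalgebra.counit (R := k) y = 0 → y = 0 := by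
    intro y hyJ hyε
    have : y ∈ I ⊓ J := ⟨(hmemI y).mpr hyε, hyJ⟩
    rwa [hbot] at this
  refine ⟨Λ, hΛε, ?_, ?_⟩
  · intro d
    have h0 : d * Λ - Coalgebra.counit (R := k) d • Λ = 0 := by
      apply key
      · exact J.sub_mem (J.smul_mem d hΛJ) (hksmul J Λ hΛJ _)
      · simp [Bialgebra.counit_mul, hΛε, smul_eq_mul]
    exact sub_eq_zero.mp h0
  · intro d
    have h0 : Λ * d - Coalgebra.counit (R := k) d • Λ = 0 := by
      apply key
      · exact J.sub_mem (hJ Λ hΛJ d) (hksmul J Λ hΛJ _)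
      · simp [Bialgebra.counit_mul, hΛε, smul_eq_mul]
    exact sub_eq_zero.mp h0


namespace SemisimpleDCP
variable {k A : Type*} [CommRing k] [Ring A] [HopfAlgebra k A] {ι κ : Type*}

lemma sum_counit_smul_left {x : A} (s : Coalgebra.Repr k x ι) :
    ∑ i ∈ s.index, Coalgebra.counit (R := k) (s.right i) • s.left i = x := by
  have h := Coalgebra.sum_tmul_counit_eq s
  calc ∑ i ∈ s.index, Coalgebra.counit (R := k) (s.right i) • s.left i
      = TensorProduct.rid k A (∑ i ∈ s.index, s.left i ⊗ₜ Coalgebra.counit (R := k) (s.right i)) := by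
        rw [map_sum]; simp [TensorProduct.rid_tmul]
    _ = TensorProduct.rid k A (x ⊗ₜ 1) := by rw [h]
    _ = x := by simp

lemma sum_counit_smul_right {x : A} (s : Coalgebra.Repr k x ι) :
    ∑ i ∈ s.index, Coalgebra.counit (R := k) (s.left i) • s.right i = x := by
  have h := Coalgebra.sum_counit_tmul_eq s
  calc ∑ i ∈ s.index, Coalgebra.counit (R := k) (s.left i) • s.right i
      = TensorProduct.lid k A (∑ i ∈ s.index, Coalgebra.counit (R := k) (s.left i) ⊗ₜ s.right i) := by
        rw [map_sum]; simp [TensorProduct.lid_tmul]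
    _ = TensorProduct.lid k A ((1 : k) ⊗ₜ x) := by rw [h]
    _ = x := by simp

/-- A representation of `comul (a*b)` from representations of `comul a`, `comul b`. -/
noncomputable def mulRepr {a b : A} (ra : Coalgebra.Repr k a ι) (rb : Coalgebra.Repr k b κ) :
    Coalgebra.Repr k (a * b) (ι × κ) where
  index := ra.index ×ˢ rb.index
  left := fun p => ra.left p.1 * rb.left p.2
  right := fun p => ra.right p.1 * rb.right p.2
  eq := by
    rw [Bialgebra.comul_mul, ← ra.eq, ← rb.eq, Finset.sum_mul_sum]
    rw [Finset.sum_product]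
    simp [Algebra.TensorProduct.tmul_mul_tmul]


/-- The Galois map `x ⊗ y ↦ Σ x₁ ⊗ x₂ y`. -/
noncomputable def gal : A ⊗[k] A →ₗ[k] A ⊗[k] A :=
  LinearMap.lTensor A (LinearMap.mul' k A) ∘ₗ (TensorProduct.assoc k A A A).toLinearMap
    ∘ₗ LinearMap.rTensor A (Coalgebra.comul (R := k))

/-- `x ⊗ y ↦ Σ x₁ ⊗ S(x₂) y`. -/
noncomputable def gal' : A ⊗[k] A →ₗ[k] A ⊗[k] A :=
  LinearMap.lTensor A (LinearMap.mul' k A) ∘ₗ (TensorProduct.assoc k A A A).toLinearMap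
    ∘ₗ LinearMap.rTensor A
      ((LinearMap.lTensor A (HopfAlgebra.antipode (R := k))) ∘ₗ Coalgebra.comul (R := k))

lemma gal_tmul (x y : A) (s : Coalgebra.Repr k x ι) :
    gal (x ⊗ₜ[k] y) = ∑ i ∈ s.index, s.left i ⊗ₜ[k] (s.right i * y) := by
  simp only [gal, LinearMap.coe_comp, Function.comp_apply, LinearEquiv.coe_coe,
    LinearMap.rTensor_tmul, ← s.eq]
  rw [TensorProduct.sum_tmul, map_sum, map_sum]
  simp [TensorProduct.assoc_tmul, LinearMap.lTensor_tmul, LinearMap.mul'_apply]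

lemma gal'_tmul (x y : A) (s : Coalgebra.Repr k x ι) :
    gal' (x ⊗ₜ[k] y) =
      ∑ i ∈ s.index, s.left i ⊗ₜ[k] (HopfAlgebra.antipode (R := k) (s.right i) * y) := by
  simp only [gal', LinearMap.coe_comp, Function.comp_apply, LinearEquiv.coe_coe,
    LinearMap.rTensor_tmul, ← s.eq]
  rw [map_sum, TensorProduct.sum_tmul, map_sum, map_sum]
  simp [TensorProduct.assoc_tmul, LinearMap.lTensor_tmul, LinearMap.mul'_apply]

lemma gal'_gal (z : A ⊗[k] A) : gal' (gal z) = z := by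
  induction z using TensorProduct.induction_on with
  | zero => simp
  | add a b ha hb => simp [map_add, ha, hb]
  | tmul x y =>
    set s := ℛ k x with hs
    set t : (i : A × A) → Coalgebra.Repr k (s.left i) (A × A) := fun i => ℛ k (s.left i) with ht
    set u : (i : A × A) → Coalgebra.Repr k (s.right i) (A × A) := fun i => ℛ k (s.right i) with hu
    rw [gal_tmul x y s, map_sum]
    have e1 : ∀ i ∈ s.index, gal' (s.left i ⊗ₜ[k] (s.right i * y)) =
        ∑ j ∈ (t i).index, (t i).left j ⊗ₜ[k]
          (HopfAlgebra.antipode (R := k) ((t i).right j) * (s.right i * y)) :=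
      fun i _ => gal'_tmul _ _ (t i)
    rw [Finset.sum_congr rfl e1]
    have coassoc := Coalgebra.sum_tmul_tmul_eq s t u
    -- apply u ⊗ (v ⊗ w) ↦ u ⊗ (S v * w * y) to both sides
    have happ := congrArg (LinearMap.lTensor A
      ((LinearMap.mulRight k y) ∘ₗ (LinearMap.mul' k A) ∘ₗ
        (LinearMap.rTensor A (HopfAlgebra.antipode (R := k))))) coassoc
    simp only [map_sum, LinearMap.lTensor_tmul, LinearMap.coe_comp, Function.comp_apply,
      LinearMap.rTensor_tmul, LinearMap.mul'_apply, LinearMap.mulRight_apply] at happ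
    calc ∑ i ∈ s.index, ∑ j ∈ (t i).index, (t i).left j ⊗ₜ[k]
          (HopfAlgebra.antipode (R := k) ((t i).right j) * (s.right i * y))
        = ∑ i ∈ s.index, ∑ j ∈ (t i).index, (t i).left j ⊗ₜ[k]
          (HopfAlgebra.antipode (R := k) ((t i).right j) * s.right i * y) := by
          simp only [mul_assoc]
      _ = ∑ i ∈ s.index, ∑ j ∈ (u i).index, s.left i ⊗ₜ[k]
          (HopfAlgebra.antipode (R := k) ((u i).left j) * (u i).right j * y) := happ
      _ = ∑ i ∈ s.index, s.left i ⊗ₜ[k]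
          ((algebraMap k A (Coalgebra.counit (R := k) (s.right i))) * y) := by
          refine Finset.sum_congr rfl fun i _ => ?_
          rw [← TensorProduct.tmul_sum]
          congr 1
          rw [← Finset.sum_mul]
          congr 1
          exact HopfAlgebra.sum_antipode_mul_eq_algebraMap_counit (u i)
      _ = ∑ i ∈ s.index, Coalgebra.counit (R := k) (s.right i) • (s.left i ⊗ₜ[k] y) := by
          refine Finset.sum_congr rfl fun i _ => ?_
          rw [← Algebra.smul_def, TensorProduct.tmul_smul]
      _ = (∑ i ∈ s.index, Coalgebra.counit (R := k) (s.right i) • s.left i) ⊗ₜ[k] y := by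
          rw [TensorProduct.sum_tmul]
          exact Finset.sum_congr rfl fun i _ => (TensorProduct.smul_tmul' _ _ _).symm
      _ = x ⊗ₜ[k] y := by rw [sum_counit_smul_left s]


variable (k) in
noncomputable abbrev S' : A →ₗ[k] A := HopfAlgebra.antipode (R := k)

lemma gal_key_left (Λ a : A) (hΛ : ∀ x : A, x * Λ = Coalgebra.counit (R := k) x • Λ)
    (r : Coalgebra.Repr k Λ ι) :
    gal (∑ i ∈ r.index, (a * r.left i) ⊗ₜ[k] S' k (r.right i)) = Λ ⊗ₜ[k] a := by
  classical
  set c := ℛ k a with hc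
  set t : (i : ι) → Coalgebra.Repr k (r.left i) (A × A) := fun i => ℛ k (r.left i) with ht
  set u : (i : ι) → Coalgebra.Repr k (r.right i) (A × A) := fun i => ℛ k (r.right i) with hu
  have coassoc := Coalgebra.sum_tmul_tmul_eq r t u
  set χ : A ⊗[k] (A ⊗[k] A) →ₗ[k] A ⊗[k] A :=
    ∑ p ∈ c.index, TensorProduct.map (LinearMap.mulLeft k (c.left p))
      ((LinearMap.mulLeft k (c.right p)) ∘ₗ (LinearMap.mul' k A) ∘ₗ
        (LinearMap.lTensor A (S' k))) with hχ
  have hχapp : ∀ (x y z : A), χ (x ⊗ₜ[k] (y ⊗ₜ[k] z)) =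
      ∑ p ∈ c.index, (c.left p * x) ⊗ₜ[k] (c.right p * (y * S' k z)) := by
    intro x y z
    rw [hχ, LinearMap.sum_apply]
    refine Finset.sum_congr rfl fun p _ => ?_
    simp [LinearMap.mulLeft_apply, LinearMap.mul'_apply]
  have happ := congrArg χ coassoc
  rw [map_sum, map_sum] at happ
  simp only [map_sum, hχapp] at happ
  -- identify LHS of happ with gal applied to our sum
  have hL : gal (∑ i ∈ r.index, (a * r.left i) ⊗ₜ[k] S' k (r.right i)) =
      ∑ i ∈ r.index, ∑ j ∈ (t i).index, ∑ p ∈ c.index,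
        (c.left p * (t i).left j) ⊗ₜ[k] (c.right p * ((t i).right j * S' k (r.right i))) := by
    rw [map_sum]
    refine Finset.sum_congr rfl fun i _ => ?_
    rw [gal_tmul _ _ (mulRepr c (t i))]
    show ∑ q ∈ c.index ×ˢ (t i).index, _ = _
    rw [Finset.sum_product]
    rw [Finset.sum_comm]
    refine Finset.sum_congr rfl fun j _ => Finset.sum_congr rfl fun p _ => ?_
    simp only [mulRepr, mul_assoc]
  rw [hL, happ]
  calc ∑ i ∈ r.index, ∑ j ∈ (u i).index, ∑ p ∈ c.index,
        (c.left p * r.left i) ⊗ₜ[k] (c.right p * ((u i).left j * S' k ((u i).right j)))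
      = ∑ i ∈ r.index, ∑ p ∈ c.index,
        (c.left p * r.left i) ⊗ₜ[k]
          (c.right p * ∑ j ∈ (u i).index, (u i).left j * S' k ((u i).right j)) := by
        refine Finset.sum_congr rfl fun i _ => ?_
        rw [Finset.sum_comm]
        refine Finset.sum_congr rfl fun p _ => ?_
        rw [Finset.mul_sum, TensorProduct.tmul_sum]
    _ = ∑ i ∈ r.index, ∑ p ∈ c.index,
        Coalgebra.counit (R := k) (r.right i) •
          ((c.left p * r.left i) ⊗ₜ[k] c.right p) := by
        refine Finset.sum_congr rfl fun i _ => Finset.sum_congr rfl fun p _ => ?_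
        rw [HopfAlgebra.sum_mul_antipode_eq_algebraMap_counit (u i), ← Algebra.commutes, ← Algebra.smul_def,
          TensorProduct.tmul_smul]
    _ = ∑ p ∈ c.index,
        (c.left p * ∑ i ∈ r.index, Coalgebra.counit (R := k) (r.right i) • r.left i)
          ⊗ₜ[k] c.right p := by
        rw [Finset.sum_comm]
        refine Finset.sum_congr rfl fun p _ => ?_
        rw [Finset.mul_sum, TensorProduct.sum_tmul]
        refine Finset.sum_congr rfl fun i _ => ?_
        rw [mul_smul_comm, TensorProduct.smul_tmul']
    _ = ∑ p ∈ c.index, (c.left p * Λ) ⊗ₜ[k] c.right p := by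
        rw [sum_counit_smul_left r]
    _ = ∑ p ∈ c.index, Λ ⊗ₜ[k] (Coalgebra.counit (R := k) (c.left p) • c.right p) := by
        refine Finset.sum_congr rfl fun p _ => ?_
        rw [hΛ, TensorProduct.smul_tmul]
    _ = Λ ⊗ₜ[k] a := by
        rw [← TensorProduct.tmul_sum, sum_counit_smul_right c]


lemma gal_key_left' (Λ a : A) (r : Coalgebra.Repr k Λ ι) :
    gal (∑ i ∈ r.index, r.left i ⊗ₜ[k] (S' k (r.right i) * a)) = Λ ⊗ₜ[k] a := by
  classical
  set t : (i : ι) → Coalgebra.Repr k (r.left i) (A × A) := fun i => ℛ k (r.left i) with ht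
  set u : (i : ι) → Coalgebra.Repr k (r.right i) (A × A) := fun i => ℛ k (r.right i) with hu
  have happ := congrArg (LinearMap.lTensor A
    ((LinearMap.mulRight k a) ∘ₗ (LinearMap.mul' k A) ∘ₗ (LinearMap.lTensor A (S' k))))
    (Coalgebra.sum_tmul_tmul_eq r t u)
  simp only [map_sum, LinearMap.lTensor_tmul, LinearMap.coe_comp, Function.comp_apply,
    LinearMap.mul'_apply, LinearMap.mulRight_apply] at happ
  have hL : gal (∑ i ∈ r.index, r.left i ⊗ₜ[k] (S' k (r.right i) * a)) =
      ∑ i ∈ r.index, ∑ j ∈ (t i).index,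
        (t i).left j ⊗ₜ[k] ((t i).right j * S' k (r.right i) * a) := by
    rw [map_sum]
    refine Finset.sum_congr rfl fun i _ => ?_
    rw [gal_tmul _ _ (t i)]
    simp only [mul_assoc]
  rw [hL, happ]
  calc ∑ i ∈ r.index, ∑ j ∈ (u i).index,
        r.left i ⊗ₜ[k] ((u i).left j * S' k ((u i).right j) * a)
      = ∑ i ∈ r.index,
        r.left i ⊗ₜ[k] ((∑ j ∈ (u i).index, (u i).left j * S' k ((u i).right j)) * a) := by
        refine Finset.sum_congr rfl fun i _ => ?_
        rw [Finset.sum_mul, TensorProduct.tmul_sum]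
    _ = ∑ i ∈ r.index, Coalgebra.counit (R := k) (r.right i) • (r.left i ⊗ₜ[k] a) := by
        refine Finset.sum_congr rfl fun i _ => ?_
        rw [HopfAlgebra.sum_mul_antipode_eq_algebraMap_counit (u i), ← Algebra.smul_def, TensorProduct.tmul_smul]
    _ = (∑ i ∈ r.index, Coalgebra.counit (R := k) (r.right i) • r.left i) ⊗ₜ[k] a := by
        rw [TensorProduct.sum_tmul]
        exact Finset.sum_congr rfl fun i _ => (TensorProduct.smul_tmul' _ _ _).symm
    _ = Λ ⊗ₜ[k] a := by rw [sum_counit_smul_left r]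

/-- The key identity for a left integral: `∑ a Λ₁ ⊗ S Λ₂ = ∑ Λ₁ ⊗ S(Λ₂) a`. -/
lemma key_left (Λ a : A) (hΛ : ∀ x : A, x * Λ = Coalgebra.counit (R := k) x • Λ)
    (r : Coalgebra.Repr k Λ ι) :
    ∑ i ∈ r.index, (a * r.left i) ⊗ₜ[k] S' k (r.right i)
      = ∑ i ∈ r.index, r.left i ⊗ₜ[k] (S' k (r.right i) * a) := by
  have h1 := gal_key_left Λ a hΛ r
  have h2 := gal_key_left' Λ a r
  calc ∑ i ∈ r.index, (a * r.left i) ⊗ₜ[k] S' k (r.right i)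
      = gal' (gal (∑ i ∈ r.index, (a * r.left i) ⊗ₜ[k] S' k (r.right i))) := (gal'_gal _).symm
    _ = gal' (gal (∑ i ∈ r.index, r.left i ⊗ₜ[k] (S' k (r.right i) * a))) := by rw [h1, h2]
    _ = ∑ i ∈ r.index, r.left i ⊗ₜ[k] (S' k (r.right i) * a) := gal'_gal _


/-- The mirrored Galois map `x ⊗ y ↦ Σ x y₁ ⊗ y₂`. -/
noncomputable def galR : A ⊗[k] A →ₗ[k] A ⊗[k] A :=
  LinearMap.rTensor A (LinearMap.mul' k A) ∘ₗ (TensorProduct.assoc k A A A).symm.toLinearMap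
    ∘ₗ LinearMap.lTensor A (Coalgebra.comul (R := k))

/-- `x ⊗ y ↦ Σ x S(y₁) ⊗ y₂`. -/
noncomputable def galR' : A ⊗[k] A →ₗ[k] A ⊗[k] A :=
  LinearMap.rTensor A (LinearMap.mul' k A) ∘ₗ (TensorProduct.assoc k A A A).symm.toLinearMap
    ∘ₗ LinearMap.lTensor A
      ((LinearMap.rTensor A (S' k)) ∘ₗ Coalgebra.comul (R := k))

lemma galR_tmul (x y : A) (s : Coalgebra.Repr k y ι) :
    galR (x ⊗ₜ[k] y) = ∑ i ∈ s.index, (x * s.left i) ⊗ₜ[k] s.right i := by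
  simp only [galR, LinearMap.coe_comp, Function.comp_apply, LinearEquiv.coe_coe,
    LinearMap.lTensor_tmul, ← s.eq]
  rw [TensorProduct.tmul_sum, map_sum, map_sum]
  simp [TensorProduct.assoc_symm_tmul, LinearMap.rTensor_tmul, LinearMap.mul'_apply]

lemma galR'_tmul (x y : A) (s : Coalgebra.Repr k y ι) :
    galR' (x ⊗ₜ[k] y) = ∑ i ∈ s.index, (x * S' k (s.left i)) ⊗ₜ[k] s.right i := by
  simp only [galR', LinearMap.coe_comp, Function.comp_apply, LinearEquiv.coe_coe,
    LinearMap.lTensor_tmul, ← s.eq]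
  rw [map_sum, TensorProduct.tmul_sum, map_sum, map_sum]
  simp [TensorProduct.assoc_symm_tmul, LinearMap.rTensor_tmul, LinearMap.mul'_apply]

lemma galR'_galR (z : A ⊗[k] A) : galR' (galR z) = z := by
  induction z using TensorProduct.induction_on with
  | zero => simp
  | add a b ha hb => simp [map_add, ha, hb]
  | tmul x y =>
    set s := ℛ k y with hs
    set t : (i : A × A) → Coalgebra.Repr k (s.left i) (A × A) := fun i => ℛ k (s.left i) with ht
    set u : (i : A × A) → Coalgebra.Repr k (s.right i) (A × A) := fun i => ℛ k (s.right i) with hu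
    rw [galR_tmul x y s, map_sum]
    have e1 : ∀ i ∈ s.index, galR' ((x * s.left i) ⊗ₜ[k] s.right i) =
        ∑ j ∈ (u i).index, (x * s.left i * S' k ((u i).left j)) ⊗ₜ[k] (u i).right j :=
      fun i _ => galR'_tmul _ _ (u i)
    rw [Finset.sum_congr rfl e1]
    have happ := congrArg (LinearMap.rTensor A
        ((LinearMap.mulLeft k x) ∘ₗ (LinearMap.mul' k A) ∘ₗ (LinearMap.lTensor A (S' k)))
        ∘ₗ (TensorProduct.assoc k A A A).symm.toLinearMap) (Coalgebra.sum_tmul_tmul_eq s t u)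
    simp only [map_sum, LinearMap.coe_comp, Function.comp_apply, LinearEquiv.coe_coe,
      TensorProduct.assoc_symm_tmul, LinearMap.rTensor_tmul, LinearMap.lTensor_tmul,
      LinearMap.mul'_apply, LinearMap.mulLeft_apply] at happ
    calc ∑ i ∈ s.index, ∑ j ∈ (u i).index,
          (x * s.left i * S' k ((u i).left j)) ⊗ₜ[k] (u i).right j
        = ∑ i ∈ s.index, ∑ j ∈ (u i).index,
          (x * (s.left i * S' k ((u i).left j))) ⊗ₜ[k] (u i).right j := by
          simp only [mul_assoc]
      _ = ∑ i ∈ s.index, ∑ j ∈ (t i).index,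
          (x * ((t i).left j * S' k ((t i).right j))) ⊗ₜ[k] s.right i := happ.symm
      _ = ∑ i ∈ s.index,
          (x * algebraMap k A (Coalgebra.counit (R := k) (s.left i))) ⊗ₜ[k] s.right i := by
          refine Finset.sum_congr rfl fun i _ => ?_
          rw [← TensorProduct.sum_tmul]
          congr 1
          rw [← Finset.mul_sum]
          congr 1
          exact HopfAlgebra.sum_mul_antipode_eq_algebraMap_counit (t i)
      _ = ∑ i ∈ s.index, Coalgebra.counit (R := k) (s.left i) • (x ⊗ₜ[k] s.right i) := by
          refine Finset.sum_congr rfl fun i _ => ?_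
          rw [← Algebra.commutes, ← Algebra.smul_def, TensorProduct.smul_tmul']
      _ = x ⊗ₜ[k] (∑ i ∈ s.index, Coalgebra.counit (R := k) (s.left i) • s.right i) := by
          rw [TensorProduct.tmul_sum]
          exact Finset.sum_congr rfl fun i _ => (TensorProduct.tmul_smul _ _ _).symm
      _ = x ⊗ₜ[k] y := by rw [sum_counit_smul_right s]


lemma galR_key_right (Λ a : A) (hΛ : ∀ x : A, Λ * x = Coalgebra.counit (R := k) x • Λ)
    (r : Coalgebra.Repr k Λ ι) :
    galR (∑ i ∈ r.index, (a * S' k (r.left i)) ⊗ₜ[k] r.right i) = a ⊗ₜ[k] Λ := by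
  classical
  set t : (i : ι) → Coalgebra.Repr k (r.left i) (A × A) := fun i => ℛ k (r.left i) with ht
  set u : (i : ι) → Coalgebra.Repr k (r.right i) (A × A) := fun i => ℛ k (r.right i) with hu
  have happ := congrArg (LinearMap.rTensor A
      ((LinearMap.mulLeft k a) ∘ₗ (LinearMap.mul' k A) ∘ₗ (LinearMap.rTensor A (S' k)))
      ∘ₗ (TensorProduct.assoc k A A A).symm.toLinearMap) (Coalgebra.sum_tmul_tmul_eq r t u)
  simp only [map_sum, LinearMap.coe_comp, Function.comp_apply, LinearEquiv.coe_coe,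
    TensorProduct.assoc_symm_tmul, LinearMap.rTensor_tmul, LinearMap.mul'_apply,
    LinearMap.mulLeft_apply] at happ
  have hL : galR (∑ i ∈ r.index, (a * S' k (r.left i)) ⊗ₜ[k] r.right i) =
      ∑ i ∈ r.index, ∑ j ∈ (u i).index,
        (a * (S' k (r.left i) * (u i).left j)) ⊗ₜ[k] (u i).right j := by
    rw [map_sum]
    refine Finset.sum_congr rfl fun i _ => ?_
    rw [galR_tmul _ _ (u i)]
    simp only [mul_assoc]
  rw [hL, ← happ]
  calc ∑ i ∈ r.index, ∑ j ∈ (t i).index,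
        (a * (S' k ((t i).left j) * (t i).right j)) ⊗ₜ[k] r.right i
      = ∑ i ∈ r.index,
        (a * ∑ j ∈ (t i).index, S' k ((t i).left j) * (t i).right j) ⊗ₜ[k] r.right i := by
        refine Finset.sum_congr rfl fun i _ => ?_
        rw [Finset.mul_sum, TensorProduct.sum_tmul]
    _ = ∑ i ∈ r.index, Coalgebra.counit (R := k) (r.left i) • (a ⊗ₜ[k] r.right i) := by
        refine Finset.sum_congr rfl fun i _ => ?_
        rw [HopfAlgebra.sum_antipode_mul_eq_algebraMap_counit (t i), ← Algebra.commutes, ← Algebra.smul_def,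
          TensorProduct.smul_tmul']
    _ = a ⊗ₜ[k] (∑ i ∈ r.index, Coalgebra.counit (R := k) (r.left i) • r.right i) := by
        rw [TensorProduct.tmul_sum]
        exact Finset.sum_congr rfl fun i _ => (TensorProduct.tmul_smul _ _ _).symm
    _ = a ⊗ₜ[k] Λ := by rw [sum_counit_smul_right r]

lemma galR_key_right' (Λ a : A) (hΛ : ∀ x : A, Λ * x = Coalgebra.counit (R := k) x • Λ)
    (r : Coalgebra.Repr k Λ ι) :
    galR (∑ i ∈ r.index, S' k (r.left i) ⊗ₜ[k] (r.right i * a)) = a ⊗ₜ[k] Λ := by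
  classical
  set c := ℛ k a with hc
  set t : (i : ι) → Coalgebra.Repr k (r.left i) (A × A) := fun i => ℛ k (r.left i) with ht
  set u : (i : ι) → Coalgebra.Repr k (r.right i) (A × A) := fun i => ℛ k (r.right i) with hu
  have coassoc := Coalgebra.sum_tmul_tmul_eq r t u
  set χ : A ⊗[k] (A ⊗[k] A) →ₗ[k] A ⊗[k] A :=
    ∑ p ∈ c.index, (TensorProduct.map
        ((LinearMap.mulRight k (c.left p)) ∘ₗ (LinearMap.mul' k A) ∘ₗ
          (LinearMap.rTensor A (S' k)))
        (LinearMap.mulRight k (c.right p)))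
      ∘ₗ (TensorProduct.assoc k A A A).symm.toLinearMap with hχ
  have hχapp : ∀ (x y z : A), χ (x ⊗ₜ[k] (y ⊗ₜ[k] z)) =
      ∑ p ∈ c.index, (S' k x * y * c.left p) ⊗ₜ[k] (z * c.right p) := by
    intro x y z
    rw [hχ, LinearMap.sum_apply]
    refine Finset.sum_congr rfl fun p _ => ?_
    simp [TensorProduct.assoc_symm_tmul, LinearMap.mul'_apply]
  have happ := congrArg χ coassoc
  rw [map_sum, map_sum] at happ
  simp only [map_sum, hχapp] at happ
  have hL : galR (∑ i ∈ r.index, S' k (r.left i) ⊗ₜ[k] (r.right i * a)) =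
      ∑ i ∈ r.index, ∑ j ∈ (u i).index, ∑ p ∈ c.index,
        (S' k (r.left i) * (u i).left j * c.left p) ⊗ₜ[k] ((u i).right j * c.right p) := by
    rw [map_sum]
    refine Finset.sum_congr rfl fun i _ => ?_
    rw [galR_tmul _ _ (mulRepr (u i) c)]
    show ∑ q ∈ (u i).index ×ˢ c.index, _ = _
    rw [Finset.sum_product]
    refine Finset.sum_congr rfl fun j _ => Finset.sum_congr rfl fun p _ => ?_
    simp only [mulRepr, mul_assoc]
  rw [hL, ← happ]
  calc ∑ i ∈ r.index, ∑ j ∈ (t i).index, ∑ p ∈ c.index,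
        (S' k ((t i).left j) * (t i).right j * c.left p) ⊗ₜ[k] (r.right i * c.right p)
      = ∑ i ∈ r.index, ∑ p ∈ c.index,
        ((∑ j ∈ (t i).index, S' k ((t i).left j) * (t i).right j) * c.left p)
          ⊗ₜ[k] (r.right i * c.right p) := by
        refine Finset.sum_congr rfl fun i _ => ?_
        rw [Finset.sum_comm]
        refine Finset.sum_congr rfl fun p _ => ?_
        rw [Finset.sum_mul, TensorProduct.sum_tmul]
    _ = ∑ i ∈ r.index, ∑ p ∈ c.index,
        Coalgebra.counit (R := k) (r.left i) • (c.left p ⊗ₜ[k] (r.right i * c.right p)) := by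
        refine Finset.sum_congr rfl fun i _ => Finset.sum_congr rfl fun p _ => ?_
        rw [HopfAlgebra.sum_antipode_mul_eq_algebraMap_counit (t i), ← Algebra.smul_def, TensorProduct.smul_tmul']
    _ = ∑ p ∈ c.index, c.left p ⊗ₜ[k]
        ((∑ i ∈ r.index, Coalgebra.counit (R := k) (r.left i) • r.right i) * c.right p) := by
        rw [Finset.sum_comm]
        refine Finset.sum_congr rfl fun p _ => ?_
        rw [Finset.sum_mul, TensorProduct.tmul_sum]
        refine Finset.sum_congr rfl fun i _ => ?_
        rw [smul_mul_assoc, TensorProduct.tmul_smul]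
    _ = ∑ p ∈ c.index, c.left p ⊗ₜ[k] (Λ * c.right p) := by rw [sum_counit_smul_right r]
    _ = ∑ p ∈ c.index, (Coalgebra.counit (R := k) (c.right p) • c.left p) ⊗ₜ[k] Λ := by
        refine Finset.sum_congr rfl fun p _ => ?_
        rw [hΛ, TensorProduct.tmul_smul, TensorProduct.smul_tmul']
    _ = a ⊗ₜ[k] Λ := by
        rw [← TensorProduct.sum_tmul, sum_counit_smul_left c]

/-- The key identity for a right integral: `∑ a S(Λ₁) ⊗ Λ₂ = ∑ S(Λ₁) ⊗ Λ₂ a`. -/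
lemma key_right (Λ a : A) (hΛ : ∀ x : A, Λ * x = Coalgebra.counit (R := k) x • Λ)
    (r : Coalgebra.Repr k Λ ι) :
    ∑ i ∈ r.index, (a * S' k (r.left i)) ⊗ₜ[k] r.right i
      = ∑ i ∈ r.index, S' k (r.left i) ⊗ₜ[k] (r.right i * a) := by
  have h1 := galR_key_right Λ a hΛ r
  have h2 := galR_key_right' Λ a hΛ r
  calc ∑ i ∈ r.index, (a * S' k (r.left i)) ⊗ₜ[k] r.right i
      = galR' (galR (∑ i ∈ r.index, (a * S' k (r.left i)) ⊗ₜ[k] r.right i)) := (galR'_galR _).symm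
    _ = galR' (galR (∑ i ∈ r.index, S' k (r.left i) ⊗ₜ[k] (r.right i * a))) := by rw [h1, h2]
    _ = ∑ i ∈ r.index, S' k (r.left i) ⊗ₜ[k] (r.right i * a) := galR'_galR _


section Maschke
variable {k A : Type*} [Field k] [Ring A] [HopfAlgebra k A]

lemma maschke_left (Λ : A) (h1 : ∀ x : A, x * Λ = Coalgebra.counit (R := k) x • Λ)
    (h2 : Coalgebra.counit (R := k) Λ = 1) : IsSemisimpleRing A := by
  classical
  refine (isSemisimpleModule_iff A A).mpr ⟨?_⟩
  intro W
  set Wk : Submodule k A := W.restrictScalars k with hWk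
  obtain ⟨C, hC⟩ := Submodule.exists_isCompl Wk
  set p : A →ₗ[k] Wk := Wk.projectionOnto C hC with hp
  set r := ℛ k Λ with hr
  set ρ : A →ₗ[k] A :=
    ∑ i ∈ r.index, (LinearMap.mulLeft k (r.left i)) ∘ₗ Wk.subtype ∘ₗ p ∘ₗ
      (LinearMap.mulLeft k (S' k (r.right i))) with hρ
  have hρapp : ∀ v : A, ρ v = ∑ i ∈ r.index, r.left i * (p (S' k (r.right i) * v) : A) := by
    intro v
    rw [hρ, LinearMap.sum_apply]
    rfl
  have hρW : ∀ v : A, ρ v ∈ W := by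
    intro v
    rw [hρapp]
    exact W.sum_mem fun i _ => W.smul_mem (r.left i) (p _).2
  have hρid : ∀ w ∈ W, ρ w = w := by
    intro w hw
    have hmem : ∀ i, S' k (r.right i) * w ∈ Wk := fun i => W.smul_mem _ hw
    have : ∀ i ∈ r.index, r.left i * (p (S' k (r.right i) * w) : A)
        = r.left i * S' k (r.right i) * w := by
      intro i _
      have := Wk.linearProjOfIsCompl_apply_left hC ⟨S' k (r.right i) * w, hmem i⟩
      rw [hp]
      rw [this]
      rw [mul_assoc]
    rw [hρapp, Finset.sum_congr rfl this, ← Finset.sum_mul,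
      HopfAlgebra.sum_mul_antipode_eq_algebraMap_counit r, h2, map_one, one_mul]
  have hρlin : ∀ (a v : A), ρ (a * v) = a * ρ v := by
    intro a v
    have key := key_left Λ a h1 r
    have happ := congrArg (LinearMap.mul' k A ∘ₗ
      LinearMap.lTensor A (Wk.subtype ∘ₗ p ∘ₗ LinearMap.mulRight k v)) key
    simp only [map_sum, LinearMap.coe_comp, Function.comp_apply, LinearMap.lTensor_tmul,
      LinearMap.mul'_apply, LinearMap.mulRight_apply, Submodule.coe_subtype] at happ
    calc ρ (a * v) = ∑ i ∈ r.index, r.left i * (p (S' k (r.right i) * a * v) : A) := by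
          rw [hρapp]; exact Finset.sum_congr rfl fun i _ => by rw [mul_assoc]
      _ = ∑ i ∈ r.index, (a * r.left i) * (p (S' k (r.right i) * v) : A) := happ.symm
      _ = a * ρ v := by
          rw [hρapp, Finset.mul_sum]
          exact Finset.sum_congr rfl fun i _ => by rw [mul_assoc]
  set ρA : A →ₗ[A] W :=
    { toFun := fun v => ⟨ρ v, hρW v⟩
      map_add' := fun x y => Subtype.ext (map_add ρ x y)
      map_smul' := fun a v => Subtype.ext (by simpa [smul_eq_mul] using hρlin a v) } with hρA
  have hproj : ∀ x : W, ρA x = x := fun x => Subtype.ext (hρid x x.2)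
  exact ⟨LinearMap.ker ρA, LinearMap.isCompl_of_proj hproj⟩

lemma maschke_right (Λ : A) (h1 : ∀ x : A, Λ * x = Coalgebra.counit (R := k) x • Λ)
    (h2 : Coalgebra.counit (R := k) Λ = 1) : IsSemisimpleRing A := by
  classical
  refine (isSemisimpleModule_iff A A).mpr ⟨?_⟩
  intro W
  set Wk : Submodule k A := W.restrictScalars k with hWk
  obtain ⟨C, hC⟩ := Submodule.exists_isCompl Wk
  set p : A →ₗ[k] Wk := Wk.projectionOnto C hC with hp
  set r := ℛ k Λ with hr
  set ρ : A →ₗ[k] A :=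
    ∑ i ∈ r.index, (LinearMap.mulLeft k (S' k (r.left i))) ∘ₗ Wk.subtype ∘ₗ p ∘ₗ
      (LinearMap.mulLeft k (r.right i)) with hρ
  have hρapp : ∀ v : A, ρ v = ∑ i ∈ r.index, S' k (r.left i) * (p (r.right i * v) : A) := by
    intro v
    rw [hρ, LinearMap.sum_apply]
    rfl
  have hρW : ∀ v : A, ρ v ∈ W := by
    intro v
    rw [hρapp]
    exact W.sum_mem fun i _ => W.smul_mem (S' k (r.left i)) (p _).2
  have hρid : ∀ w ∈ W, ρ w = w := by
    intro w hw
    have hmem : ∀ i, r.right i * w ∈ Wk := fun i => W.smul_mem _ hw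
    have : ∀ i ∈ r.index, S' k (r.left i) * (p (r.right i * w) : A)
        = S' k (r.left i) * r.right i * w := by
      intro i _
      have := Wk.linearProjOfIsCompl_apply_left hC ⟨r.right i * w, hmem i⟩
      rw [hp, this, mul_assoc]
    rw [hρapp, Finset.sum_congr rfl this, ← Finset.sum_mul,
      HopfAlgebra.sum_antipode_mul_eq_algebraMap_counit r, h2, map_one, one_mul]
  have hρlin : ∀ (a v : A), ρ (a * v) = a * ρ v := by
    intro a v
    have key := key_right Λ a h1 r
    have happ := congrArg (LinearMap.mul' k A ∘ₗ
      LinearMap.lTensor A (Wk.subtype ∘ₗ p ∘ₗ LinearMap.mulRight k v)) key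
    simp only [map_sum, LinearMap.coe_comp, Function.comp_apply, LinearMap.lTensor_tmul,
      LinearMap.mul'_apply, LinearMap.mulRight_apply, Submodule.coe_subtype] at happ
    calc ρ (a * v) = ∑ i ∈ r.index, S' k (r.left i) * (p (r.right i * a * v) : A) := by
          rw [hρapp]; exact Finset.sum_congr rfl fun i _ => by rw [mul_assoc]
      _ = ∑ i ∈ r.index, (a * S' k (r.left i)) * (p (r.right i * v) : A) := happ.symm
      _ = a * ρ v := by
          rw [hρapp, Finset.mul_sum]
          exact Finset.sum_congr rfl fun i _ => by rw [mul_assoc]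
  set ρA : A →ₗ[A] W :=
    { toFun := fun v => ⟨ρ v, hρW v⟩
      map_add' := fun x y => Subtype.ext (map_add ρ x y)
      map_smul' := fun a v => Subtype.ext (by simpa [smul_eq_mul] using hρlin a v) } with hρA
  have hproj : ∀ x : W, ρA x = x := fun x => Subtype.ext (hρid x x.2)
  exact ⟨LinearMap.ker ρA, LinearMap.isCompl_of_proj hproj⟩

end Maschke

end SemisimpleDCP


open SemisimpleDCP in
/-- Let `D = A ⋈ H` be a double cross product of finite-dimensional Hopf algebras `A` and
`H` (the algebra structure of `D` restricts to that of `A` on `A ⊗ 1` and of `H` on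
`1 ⊗ H`, with `(a ⊗ 1)(a' ⊗ h) = aa' ⊗ h`, `(a ⊗ h)(1 ⊗ h') = a ⊗ hh'` and
`ε_D = ε_A ⊗ ε_H`).  If `D` is semisimple, then both `A` and `H` are semisimple. -/
theorem semisimple_of_double_cross_product (k A H D : Type*) [Field k]
    [Ring A] [HopfAlgebra k A] [Ring H] [HopfAlgebra k H] [Ring D] [HopfAlgebra k D]
    [FiniteDimensional k A] [FiniteDimensional k H] [FiniteDimensional k D]
    (f : (A ⊗[k] H) ≃ₗ[k] D)
    (hone : f (1 ⊗ₜ 1) = 1)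
    (hmulA : ∀ (a a' : A) (h : H), f (a ⊗ₜ 1) * f (a' ⊗ₜ h) = f ((a * a') ⊗ₜ h))
    (hmulH : ∀ (a : A) (h h' : H), f (a ⊗ₜ h) * f (1 ⊗ₜ h') = f (a ⊗ₜ (h * h')))
    (hcounit : ∀ x : A ⊗[k] H,
      Coalgebra.counit (R := k) (f x) = Coalgebra.counit (R := k) x)
    (hss : IsSemisimpleRing D) :
    IsSemisimpleRing A ∧ IsSemisimpleRing H := by
  classical
  haveI := hss
  obtain ⟨Λ, hΛε, hΛl, hΛr⟩ := exists_two_sided_integral k D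
  set t : A ⊗[k] H := f.symm Λ with hts
  have hft : f t = Λ := f.apply_symm_apply Λ
  have hεt : Coalgebra.counit (R := k) t = 1 := by
    rw [← hcounit t, hft, hΛε]
  constructor
  · -- A is semisimple
    set π : A ⊗[k] H →ₗ[k] A :=
      (TensorProduct.rid k A).toLinearMap ∘ₗ
        LinearMap.lTensor A (Coalgebra.counit (R := k)) with hπ
    have hπtmul : ∀ (a : A) (h : H),
        π (a ⊗ₜ[k] h) = Coalgebra.counit (R := k) h • a := by
      intro a h
      simp [hπ, TensorProduct.rid_tmul]
    set Λ_A : A := π t with hΛA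
    have hmul : ∀ (a : A) (x : A ⊗[k] H),
        f ((LinearMap.mulLeft k a).rTensor H x) = f (a ⊗ₜ[k] (1 : H)) * f x := by
      intro a x
      induction x using TensorProduct.induction_on with
      | zero => simp
      | add u v hu hv => simp only [map_add, mul_add, add_mul, hu, hv]
      | tmul a' h => rw [LinearMap.rTensor_tmul, LinearMap.mulLeft_apply, hmulA]
    have hmulπ : ∀ (a : A) (x : A ⊗[k] H),
        π ((LinearMap.mulLeft k a).rTensor H x) = a * π x := by
      intro a x
      induction x using TensorProduct.induction_on with
      | zero => simp
      | add u v hu hv => simp only [map_add, mul_add, add_mul, hu, hv]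
      | tmul a' h =>
        rw [LinearMap.rTensor_tmul, LinearMap.mulLeft_apply, hπtmul, hπtmul, mul_smul_comm]
    have hcnt1 : ∀ a : A, Coalgebra.counit (R := k) (a ⊗ₜ[k] (1 : H))
        = Coalgebra.counit (R := k) a := by
      intro a
      simp [TensorProduct.counit_tmul, LinearMap.mul'_apply]
    have hint : ∀ a : A, (LinearMap.mulLeft k a).rTensor H t
        = Coalgebra.counit (R := k) a • t := by
      intro a
      apply f.injective
      rw [hmul a t, hft, hΛl (f (a ⊗ₜ[k] (1 : H))), hcounit, hcnt1, map_smul, hft]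
    have hintA : ∀ a : A, a * Λ_A = Coalgebra.counit (R := k) a • Λ_A := by
      intro a
      rw [hΛA, ← hmulπ a t, hint, map_smul]
    have hεπ : ∀ x : A ⊗[k] H,
        Coalgebra.counit (R := k) (π x) = Coalgebra.counit (R := k) x := by
      intro x
      induction x using TensorProduct.induction_on with
      | zero => simp
      | add u v hu hv => simp only [map_add, hu, hv]
      | tmul a h =>
        rw [hπtmul]
        simp [TensorProduct.counit_tmul, LinearMap.mul'_apply, smul_eq_mul,
          mul_comm]
    have hεΛA : Coalgebra.counit (R := k) Λ_A = 1 := by rw [hΛA, hεπ, hεt]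
    exact maschke_left Λ_A hintA hεΛA
  · -- H is semisimple
    set μ : A ⊗[k] H →ₗ[k] H :=
      (TensorProduct.lid k H).toLinearMap ∘ₗ
        LinearMap.rTensor H (Coalgebra.counit (R := k)) with hμ
    have hμtmul : ∀ (a : A) (h : H),
        μ (a ⊗ₜ[k] h) = Coalgebra.counit (R := k) a • h := by
      intro a h
      simp [hμ, TensorProduct.lid_tmul]
    set Λ_H : H := μ t with hΛH
    have hmul : ∀ (h : H) (x : A ⊗[k] H),
        f ((LinearMap.mulRight k h).lTensor A x) = f x * f ((1 : A) ⊗ₜ[k] h) := by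
      intro h x
      induction x using TensorProduct.induction_on with
      | zero => simp
      | add u v hu hv => simp only [map_add, mul_add, add_mul, hu, hv]
      | tmul a h' => rw [LinearMap.lTensor_tmul, LinearMap.mulRight_apply, hmulH]
    have hmulμ : ∀ (h : H) (x : A ⊗[k] H),
        μ ((LinearMap.mulRight k h).lTensor A x) = μ x * h := by
      intro h x
      induction x using TensorProduct.induction_on with
      | zero => simp
      | add u v hu hv => simp only [map_add, mul_add, add_mul, hu, hv]
      | tmul a h' =>
        rw [LinearMap.lTensor_tmul, LinearMap.mulRight_apply, hμtmul, hμtmul, smul_mul_assoc]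
    have hcnt1 : ∀ h : H, Coalgebra.counit (R := k) ((1 : A) ⊗ₜ[k] h)
        = Coalgebra.counit (R := k) h := by
      intro h
      simp [TensorProduct.counit_tmul, LinearMap.mul'_apply]
    have hint : ∀ h : H, (LinearMap.mulRight k h).lTensor A t
        = Coalgebra.counit (R := k) h • t := by
      intro h
      apply f.injective
      rw [hmul h t, hft, hΛr (f ((1 : A) ⊗ₜ[k] h)), hcounit, hcnt1, map_smul, hft]
    have hintH : ∀ h : H, Λ_H * h = Coalgebra.counit (R := k) h • Λ_H := by
      intro h
      rw [hΛH, ← hmulμ h t, hint, map_smul]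
    have hεμ : ∀ x : A ⊗[k] H,
        Coalgebra.counit (R := k) (μ x) = Coalgebra.counit (R := k) x := by
      intro x
      induction x using TensorProduct.induction_on with
      | zero => simp
      | add u v hu hv => simp only [map_add, hu, hv]
      | tmul a h =>
        rw [hμtmul]
        simp [TensorProduct.counit_tmul, LinearMap.mul'_apply, smul_eq_mul, mul_comm]
    have hεΛH : Coalgebra.counit (R := k) Λ_H = 1 := by rw [hΛH, hεμ, hεt]
    exact maschke_right Λ_H hintH hεΛH
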